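/- Let (r_k) be a non-increasing sequence of non-negative real numbers converging to 0, let a > 0, c > 0 and b ≥ 1, and suppose there exists N ∈ ℕ such that r_k ≤ c(r_{k−1} − r_k) + a(r_k − r_{k+1})^b for all k ≥ N. Then (r_k) converges linearly to 0: there exist q ∈ (0, 1), a constant C > 0 and N′ ∈ ℕ such that r_k ≤ C·q^k for all k ≥ N′. -/
import Mathlib


open Filter Topology

/-- Lemma on convergence rates for
`r_k ≤ c(r_{k−1} − r_k) + a(r_k − r_{k+1})^b`, case `b ≥ 1`: linear convergence.
(The recursion is stated with shifted index `k+1` to avoid natural subtraction.) -/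
theorem stmt_14
    (r : ℕ → ℝ) (hmono : ∀ k, r (k + 1) ≤ r k) (hnonneg : ∀ k, 0 ≤ r k)
    (hto0 : Tendsto r atTop (𝓝 0))
    (a c b : ℝ) (ha : 0 < a) (hc : 0 < c) (hb : 1 ≤ b)
    (N : ℕ)
    (hrec : ∀ k, N ≤ k →
      r (k + 1) ≤ c * (r k - r (k + 1)) + a * (r (k + 1) - r (k + 2)) ^ b) :
    ∃ q ∈ Set.Ioo (0 : ℝ) 1, ∃ C > 0, ∃ N' : ℕ, ∀ k, N' ≤ k → r k ≤ C * q ^ k := by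
  set q : ℝ := (c + a) / (1 + c + a) with hq
  have hca : 0 < c + a := by linarith
  have h1ca : 0 < 1 + c + a := by linarith
  have hq0 : 0 < q := div_pos hca h1ca
  have hq1 : q < 1 := (div_lt_one h1ca).2 (by linarith)
  have hev : ∀ᶠ k in atTop, r k < 1 := hto0.eventually (gt_mem_nhds one_pos)
  obtain ⟨M, hMN, hM1⟩ := ((eventually_ge_atTop N).and hev).exists
  have hanti : Antitone r := antitone_nat_of_succ_le hmono
  set u : ℕ → ℝ := fun k => c * r k + a * r (k + 1) with hu
  have hu_nonneg : ∀ k, 0 ≤ u k := fun k =>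
    add_nonneg (mul_nonneg hc.le (hnonneg k)) (mul_nonneg ha.le (hnonneg _))
  have key : ∀ k, M ≤ k → u (k + 1) ≤ q * u k := by
    intro k hk
    have hx0 : 0 ≤ r (k + 1) - r (k + 2) := sub_nonneg.2 (hmono (k + 1))
    have hx1 : r (k + 1) - r (k + 2) ≤ 1 := by
      have h2 : r (k + 1) ≤ r M := hanti (le_trans hk (Nat.le_succ k))
      have h3 := hnonneg (k + 2)
      linarith
    have hpow : (r (k + 1) - r (k + 2)) ^ b ≤ r (k + 1) - r (k + 2) := by
      rcases eq_or_lt_of_le hx0 with h | h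
      · rw [← h, Real.zero_rpow (by linarith : b ≠ 0)]
      · calc (r (k + 1) - r (k + 2)) ^ b
            ≤ (r (k + 1) - r (k + 2)) ^ (1 : ℝ) :=
              Real.rpow_le_rpow_of_exponent_ge h hx1 hb
          _ = r (k + 1) - r (k + 2) := Real.rpow_one _
    have h1 : r (k + 1) ≤ u k - u (k + 1) := by
      have hr := hrec k (le_trans hMN hk)
      have h2 : a * (r (k + 1) - r (k + 2)) ^ b ≤ a * (r (k + 1) - r (k + 2)) :=
        mul_le_mul_of_nonneg_left hpow ha.le
      simp only [hu]
      linarith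
    have h2 : u (k + 1) ≤ (c + a) * r (k + 1) := by
      have h3 : r (k + 2) ≤ r (k + 1) := hmono _
      simp only [hu]
      nlinarith
    have h3 : u (k + 1) ≤ (c + a) * (u k - u (k + 1)) :=
      le_trans h2 (mul_le_mul_of_nonneg_left h1 hca.le)
    rw [hq, div_mul_eq_mul_div, le_div_iff₀ h1ca]
    nlinarith
  have bound : ∀ k, M ≤ k → u k ≤ u M * q ^ (k - M) := by
    intro k hk
    induction k, hk using Nat.le_induction with
    | base => simp
    | succ n hn ih =>
      calc u (n + 1) ≤ q * u n := key n hn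
        _ ≤ q * (u M * q ^ (n - M)) := mul_le_mul_of_nonneg_left ih hq0.le
        _ = u M * q ^ (n + 1 - M) := by
            rw [Nat.succ_sub hn, pow_succ]; ring
  have hqpM : 0 < q ^ M := pow_pos hq0 M
  refine ⟨q, ⟨hq0, hq1⟩, (u M + 1) / (c * q ^ M),
    div_pos (by linarith [hu_nonneg M]) (by positivity), M, ?_⟩
  intro k hk
  have h1 : c * r k ≤ u k := by
    have := mul_nonneg ha.le (hnonneg (k + 1))
    simp only [hu]
    linarith
  have h2 := bound k hk
  have hqk : q ^ (k - M) * q ^ M = q ^ k := by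
    rw [← pow_add, Nat.sub_add_cancel hk]
  rw [div_mul_eq_mul_div, le_div_iff₀ (by positivity : (0:ℝ) < c * q ^ M)]
  have h4 : 0 ≤ q ^ k := pow_nonneg hq0.le k
  calc r k * (c * q ^ M) = (c * r k) * q ^ M := by ring
    _ ≤ (u M * q ^ (k - M)) * q ^ M :=
        mul_le_mul_of_nonneg_right (h1.trans h2) hqpM.le
    _ = u M * q ^ k := by rw [mul_assoc, hqk]
    _ ≤ (u M + 1) * q ^ k := by nlinarith
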